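/- Define, for a CM γ_N = [[A_N, C_N],[C_Nᵀ, B_N]] (with γ_N ≥ iJ), the map producing γ_{N+1} with blocks A_{N+1} = B_{N+1} = A_N − Re(X_N) and C_{N+1} = −Im(X_N), where X_N = C_N (B_N − iJ)⁻¹ C_Nᵀ (pseudoinverse). Suppose γ_N ≥ γ_A ⊕ γ_B for CMs γ_A (2n×2n) and γ_B (2m×2m). Then γ_{N+1} ≥ γ_A ⊕ γ_A. -/

import Mathlib

open Matrix
open scoped Classical ComplexOrder

noncomputable section

/-- Embed a real matrix into the complex matrices. -/
def toC {k l : ℕ} (A : Matrix (Fin k) (Fin l) ℝ) : Matrix (Fin k) (Fin l) ℂ :=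
  A.map Complex.ofReal

/-- The standard symplectic form `Jₙ = ⊕ₖ [[0,-1],[1,0]]` on `ℝ^{2n}`. -/
def J (n : ℕ) : Matrix (Fin (2*n)) (Fin (2*n)) ℝ :=
  Matrix.of fun i j =>
    if i.val + 1 = j.val ∧ i.val % 2 = 0 then -1
    else if j.val + 1 = i.val ∧ j.val % 2 = 0 then 1 else 0

/-- A correlation matrix (CM): a real symmetric `2n×2n` matrix with `γ - iJₙ ≥ 0`. -/
def IsCM {n : ℕ} (γ : Matrix (Fin (2*n)) (Fin (2*n)) ℝ) : Prop :=
  γ.IsSymm ∧ (toC γ - Complex.I • toC (J n)).PosSemidef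

/-- The operator norm (largest singular value) of a real matrix. -/
def opNorm {n m : ℕ} (C : Matrix (Fin n) (Fin m) ℝ) : ℝ :=
  ‖(Matrix.toEuclideanLin (𝕜 := ℝ) C).toContinuousLinearMap‖

/-- The square root of a positive semidefinite matrix (the former `Matrix.PosSemidef.sqrt`). -/
def PosSemidef.sqrt {k : Type*} [Fintype k] [DecidableEq k] {𝕜 : Type*} [RCLike 𝕜]
    {A : Matrix k k 𝕜} (hA : A.PosSemidef) : Matrix k k 𝕜 :=
  hA.1.eigenvectorUnitary.1 * diagonal ((↑) ∘ (√·) ∘ hA.1.eigenvalues) *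
    (star hA.1.eigenvectorUnitary : Matrix k k 𝕜)

/-- The trace norm (sum of singular values) of a real square matrix. -/
def trNorm {k : ℕ} (A : Matrix (Fin k) (Fin k) ℝ) : ℝ :=
  (PosSemidef.sqrt (Matrix.posSemidef_conjTranspose_mul_self A)).trace

/-- The trace norm of a complex square matrix. -/
def trNormC {k : ℕ} (A : Matrix (Fin k) (Fin k) ℂ) : ℝ :=
  ((PosSemidef.sqrt (Matrix.posSemidef_conjTranspose_mul_self A)).trace).re

/-- The Moore–Penrose pseudoinverse of a real matrix. -/
def pinvR {n m : ℕ} (A : Matrix (Fin n) (Fin m) ℝ) : Matrix (Fin m) (Fin n) ℝ :=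
  if h : ∃ B : Matrix (Fin m) (Fin n) ℝ,
      A * B * A = A ∧ B * A * B = B ∧ (A * B)ᵀ = A * B ∧ (B * A)ᵀ = B * A
  then h.choose else 0

/-- The Moore–Penrose pseudoinverse of a complex matrix. -/
def pinvC {n m : ℕ} (A : Matrix (Fin n) (Fin m) ℂ) : Matrix (Fin m) (Fin n) ℂ :=
  if h : ∃ B : Matrix (Fin m) (Fin n) ℂ,
      A * B * A = A ∧ B * A * B = B ∧ (A * B)ᴴ = A * B ∧ (B * A)ᴴ = B * A
  then h.choose else 0

/-- Real part of a complex matrix. -/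
def reM {k l : ℕ} (X : Matrix (Fin k) (Fin l) ℂ) : Matrix (Fin k) (Fin l) ℝ :=
  Matrix.of fun i j => (X i j).re

/-- Imaginary part of a complex matrix. -/
def imM {k l : ℕ} (X : Matrix (Fin k) (Fin l) ℂ) : Matrix (Fin k) (Fin l) ℝ :=
  Matrix.of fun i j => (X i j).im

/-- `X = C (B − iJₘ)⁻ Cᵀ` appearing in the nonlinear map. -/
def Xmap {n m : ℕ} (B : Matrix (Fin (2*m)) (Fin (2*m)) ℝ)
    (C : Matrix (Fin (2*n)) (Fin (2*m)) ℝ) : Matrix (Fin (2*n)) (Fin (2*n)) ℂ :=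
  toC C * pinvC (toC B - Complex.I • toC (J m)) * toC Cᵀ

/-- `A_{N+1} = A_N − Re(X_N)`. -/
def nextA {n m : ℕ} (A : Matrix (Fin (2*n)) (Fin (2*n)) ℝ)
    (B : Matrix (Fin (2*m)) (Fin (2*m)) ℝ) (C : Matrix (Fin (2*n)) (Fin (2*m)) ℝ) :
    Matrix (Fin (2*n)) (Fin (2*n)) ℝ :=
  A - reM (Xmap B C)

/-- `C_{N+1} = −Im(X_N)`. -/
def nextC {n m : ℕ} (B : Matrix (Fin (2*m)) (Fin (2*m)) ℝ)
    (C : Matrix (Fin (2*n)) (Fin (2*m)) ℝ) : Matrix (Fin (2*n)) (Fin (2*n)) ℝ :=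
  - imM (Xmap B C)

/-- CM predicate for a bipartite block-indexed real matrix, w.r.t. `Jₙ ⊕ Jₘ`. -/
def IsCM2 {n m : ℕ} (γ : Matrix (Fin (2*n) ⊕ Fin (2*m)) (Fin (2*n) ⊕ Fin (2*m)) ℝ) : Prop :=
  γ.IsSymm ∧ (γ.map Complex.ofReal -
    Complex.I • (fromBlocks (J n) 0 0 (J m)).map Complex.ofReal).PosSemidef

/-- Separability of a bipartite CM: `γ ≥ γ_A ⊕ γ_B` for some CMs `γ_A, γ_B`. -/
def SepCM {n m : ℕ} (γ : Matrix (Fin (2*n) ⊕ Fin (2*m)) (Fin (2*n) ⊕ Fin (2*m)) ℝ) : Prop :=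
  ∃ (γA : Matrix (Fin (2*n)) (Fin (2*n)) ℝ) (γB : Matrix (Fin (2*m)) (Fin (2*m)) ℝ),
    IsCM γA ∧ IsCM γB ∧ (γ - fromBlocks γA 0 0 γB).PosSemidef

/-- The block matrix `[[A, C],[Cᵀ, A]]` built from the pair `(A, C)`. -/
def γmat {n : ℕ} (p : Matrix (Fin (2*n)) (Fin (2*n)) ℝ × Matrix (Fin (2*n)) (Fin (2*n)) ℝ) :
    Matrix (Fin (2*n) ⊕ Fin (2*n)) (Fin (2*n) ⊕ Fin (2*n)) ℝ :=
  fromBlocks p.1 p.2 p.2ᵀ p.1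

/-- The iterated sequence: `seq A0 B0 C0 N = (A_{N+1}, C_{N+1})`; the map gives `0`
whenever the current matrix is not a CM. -/
def seq {n m : ℕ} (A0 : Matrix (Fin (2*n)) (Fin (2*n)) ℝ)
    (B0 : Matrix (Fin (2*m)) (Fin (2*m)) ℝ) (C0 : Matrix (Fin (2*n)) (Fin (2*m)) ℝ) :
    ℕ → Matrix (Fin (2*n)) (Fin (2*n)) ℝ × Matrix (Fin (2*n)) (Fin (2*n)) ℝ
  | 0 => if IsCM2 (fromBlocks A0 C0 C0ᵀ B0) then (nextA A0 B0 C0, nextC B0 C0) else (0, 0)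
  | (N+1) => if IsCM2 (γmat (seq A0 B0 C0 N)) then
      (nextA (seq A0 B0 C0 N).1 (seq A0 B0 C0 N).1 (seq A0 B0 C0 N).2,
       nextC (seq A0 B0 C0 N).1 (seq A0 B0 C0 N).2)
    else (0, 0)

/-- uniqueness of Moore-Penrose pseudoinverse -/
lemma mp_unique {p q : ℕ} {A : Matrix (Fin p) (Fin q) ℂ} {B C : Matrix (Fin q) (Fin p) ℂ}
    (hB : A * B * A = A ∧ B * A * B = B ∧ (A * B)ᴴ = A * B ∧ (B * A)ᴴ = B * A)
    (hC : A * C * A = A ∧ C * A * C = C ∧ (A * C)ᴴ = A * C ∧ (C * A)ᴴ = C * A) :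
    B = C := by
  obtain ⟨hB1, hB2, hB3, hB4⟩ := hB
  obtain ⟨hC1, hC2, hC3, hC4⟩ := hC
  have hAB : A * B = A * C := by
    calc A * B = (A * C * A) * B := by rw [hC1]
    _ = (A * C) * (A * B) := by simp only [Matrix.mul_assoc]
    _ = (A * C)ᴴ * (A * B)ᴴ := by rw [hC3, hB3]
    _ = ((A * B) * (A * C))ᴴ := (conjTranspose_mul (A*B) (A*C)).symm
    _ = ((A * B * A) * C)ᴴ := by simp only [Matrix.mul_assoc]
    _ = (A * C)ᴴ := by rw [hB1]
    _ = A * C := hC3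
  have hBA : B * A = C * A := by
    calc B * A = B * (A * C * A) := by rw [hC1]
    _ = (B * A) * (C * A) := by simp only [Matrix.mul_assoc]
    _ = (B * A)ᴴ * (C * A)ᴴ := by rw [hB4, hC4]
    _ = ((C * A) * (B * A))ᴴ := (conjTranspose_mul (C*A) (B*A)).symm
    _ = (C * (A * B * A))ᴴ := by simp only [Matrix.mul_assoc]
    _ = (C * A)ᴴ := by rw [hB1]
    _ = C * A := hC4
  calc B = B * A * B := hB2.symm
  _ = C * A * B := by rw [hBA]
  _ = C * (A * B) := by rw [Matrix.mul_assoc]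
  _ = C * (A * C) := by rw [hAB]
  _ = C * A * C := by rw [Matrix.mul_assoc]
  _ = C := hC2

lemma mp_exists_of_isHermitian {k : ℕ} {A : Matrix (Fin k) (Fin k) ℂ} (hA : A.IsHermitian) :
    ∃ B : Matrix (Fin k) (Fin k) ℂ,
      A * B * A = A ∧ B * A * B = B ∧ (A * B)ᴴ = A * B ∧ (B * A)ᴴ = B * A := by
  classical
  set U : Matrix (Fin k) (Fin k) ℂ := (hA.eigenvectorUnitary : Matrix (Fin k) (Fin k) ℂ) with hU
  have hU1 : star U * U = 1 := Matrix.mem_unitaryGroup_iff'.mp hA.eigenvectorUnitary.2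
  have hU2 : U * star U = 1 := Matrix.mem_unitaryGroup_iff.mp hA.eigenvectorUnitary.2
  set d : Fin k → ℂ := RCLike.ofReal ∘ hA.eigenvalues with hd
  set e : Fin k → ℂ :=
    fun i => ((if hA.eigenvalues i = 0 then 0 else (hA.eigenvalues i)⁻¹ : ℝ) : ℂ) with he
  have hspec : A = U * diagonal d * star U := hA.spectral_theorem
  have key : ∀ f g : Fin k → ℂ,
      (U * diagonal f * star U) * (U * diagonal g * star U) = U * diagonal (f * g) * star U := by
    intro f g
    calc (U * diagonal f * star U) * (U * diagonal g * star U)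
        = U * diagonal f * (star U * U) * diagonal g * star U := by simp only [Matrix.mul_assoc]
    _ = U * (diagonal f * diagonal g) * star U := by rw [hU1]; simp only [Matrix.mul_one, Matrix.mul_assoc]
    _ = U * diagonal (f * g) * star U := by rw [diagonal_mul_diagonal]; rfl
  have hded : d * e * d = d := by
    funext i
    by_cases h : hA.eigenvalues i = 0 <;>
      simp [hd, he, h, Pi.mul_apply]
  have hede : e * d * e = e := by
    funext i
    by_cases h : hA.eigenvalues i = 0 <;>
      simp [hd, he, h, Pi.mul_apply]
  have hreal : ∀ f : Fin k → ℂ, (∀ i, star (f i) = f i) →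
      (U * diagonal f * star U)ᴴ = U * diagonal f * star U := by
    intro f hf
    calc (U * diagonal f * star U)ᴴ = star (star U) * (diagonal f)ᴴ * star U := by
          rw [conjTranspose_mul, conjTranspose_mul]
          simp only [Matrix.mul_assoc]
          rfl
    _ = U * diagonal f * star U := by
          rw [star_star, diagonal_conjTranspose, show star f = f from funext hf]
  refine ⟨U * diagonal e * star U, ?_, ?_, ?_, ?_⟩
  · rw [hspec, key, key, hded]
  · rw [hspec, key, key, hede]
  · rw [hspec, key]
    refine hreal _ fun i => ?_
    by_cases h : hA.eigenvalues i = 0 <;> simp [hd, he, h, Pi.mul_apply, Complex.conj_ofReal]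
  · rw [hspec, key]
    refine hreal _ fun i => ?_
    by_cases h : hA.eigenvalues i = 0 <;> simp [hd, he, h, Pi.mul_apply, Complex.conj_ofReal]

lemma pinvC_spec {k : ℕ} {T : Matrix (Fin k) (Fin k) ℂ} (hT : T.IsHermitian) :
    T * pinvC T * T = T ∧ pinvC T * T * pinvC T = pinvC T ∧
      (T * pinvC T)ᴴ = T * pinvC T ∧ (pinvC T * T)ᴴ = pinvC T * T := by
  rw [pinvC, dif_pos (mp_exists_of_isHermitian hT)]
  exact (mp_exists_of_isHermitian hT).choose_spec

lemma pinvC_herm {k : ℕ} {T : Matrix (Fin k) (Fin k) ℂ} (hT : T.IsHermitian) :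
    (pinvC T)ᴴ = pinvC T := by
  obtain ⟨h1, h2, h3, h4⟩ := pinvC_spec hT
  have hTh : Tᴴ = T := hT
  refine mp_unique (A := T) ?_ ⟨h1, h2, h3, h4⟩
  refine ⟨?_, ?_, ?_, ?_⟩
  · have h := congrArg conjTranspose h1
    rw [conjTranspose_mul, conjTranspose_mul, hTh] at h
    rw [Matrix.mul_assoc]
    exact h
  · have h := congrArg conjTranspose h2
    rw [conjTranspose_mul, conjTranspose_mul, hTh] at h
    rw [Matrix.mul_assoc]
    exact h
  · have e : T * (pinvC T)ᴴ = pinvC T * T := by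
      calc T * (pinvC T)ᴴ = Tᴴ * (pinvC T)ᴴ := by rw [hTh]
      _ = (pinvC T * T)ᴴ := (conjTranspose_mul _ _).symm
      _ = pinvC T * T := h4
    rw [e, h4]
  · have e : (pinvC T)ᴴ * T = T * pinvC T := by
      calc (pinvC T)ᴴ * T = (pinvC T)ᴴ * Tᴴ := by rw [hTh]
      _ = (T * pinvC T)ᴴ := (conjTranspose_mul _ _).symm
      _ = T * pinvC T := h3
    rw [e, h3]

/-- Schur complement of a PSD block matrix is PSD (pseudoinverse version). -/
lemma schur_psd {a b : ℕ} {P : Matrix (Fin a) (Fin a) ℂ} {Q : Matrix (Fin a) (Fin b) ℂ}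
    {T : Matrix (Fin b) (Fin b) ℂ} (hT : T.IsHermitian)
    (hΓ : (fromBlocks P Q Qᴴ T).PosSemidef) :
    (P - Q * pinvC T * Qᴴ).PosSemidef := by
  obtain ⟨h1, h2, h3, h4⟩ := pinvC_spec hT
  have hh := pinvC_herm hT
  set B : Matrix (Fin a ⊕ Fin b) (Fin a ⊕ Fin b) ℂ :=
    fromBlocks 1 (-(Q * pinvC T)) 0 0 with hB
  have hps := hΓ.mul_mul_conjTranspose_same B
  have hBH : Bᴴ = fromBlocks 1 0 (-(pinvC T * Qᴴ)) 0 := by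
    rw [hB, fromBlocks_conjTranspose]
    rw [conjTranspose_neg, conjTranspose_mul, hh]
    simp
  have hW : (B * fromBlocks P Q Qᴴ T * Bᴴ).submatrix Sum.inl Sum.inl
      = P - Q * pinvC T * Qᴴ := by
    rw [hBH, hB, fromBlocks_multiply, fromBlocks_multiply]
    have hE : ∀ (E : Matrix (Fin a) (Fin a) ℂ) (F : Matrix (Fin a) (Fin b) ℂ)
        (G : Matrix (Fin b) (Fin a) ℂ) (H : Matrix (Fin b) (Fin b) ℂ),
        (fromBlocks E F G H).submatrix Sum.inl Sum.inl = E := fun _ _ _ _ => rfl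
    rw [hE]
    have key : Q * (pinvC T * (T * (pinvC T * Qᴴ))) = Q * (pinvC T * Qᴴ) := by
      have h' : Q * (pinvC T * T * pinvC T) * Qᴴ = Q * pinvC T * Qᴴ := by rw [h2]
      simp only [Matrix.mul_assoc] at h' ⊢
      exact h'
    simp only [Matrix.one_mul, Matrix.mul_one, Matrix.mul_zero, Matrix.zero_mul,
      Matrix.neg_mul, Matrix.mul_neg, add_zero, neg_neg, Matrix.add_mul, Matrix.mul_assoc]
    rw [key]
    abel
  exact hW ▸ hps.submatrix Sum.inl

/-- A real PSD matrix maps to a complex PSD matrix. -/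
lemma map_posSemidef {ι : Type*} [Fintype ι] [DecidableEq ι] {M : Matrix ι ι ℝ}
    (hM : M.PosSemidef) : (M.map Complex.ofReal).PosSemidef := by
  obtain ⟨B, hB⟩ : ∃ B : Matrix ι ι ℝ, M = Bᴴ * B := by
    open scoped MatrixOrder in exact CStarAlgebra.nonneg_iff_eq_star_mul_self.mp hM.nonneg
  have : M.map Complex.ofReal = (B.map Complex.ofReal)ᴴ * B.map Complex.ofReal := by
    rw [hB]
    ext i j
    simp only [Matrix.map_apply, Matrix.mul_apply, conjTranspose_apply, Complex.ofReal_sum,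
      Complex.conj_ofReal, Complex.ofReal_mul, Complex.star_def, star_trivial]
  rw [this]
  exact posSemidef_conjTranspose_mul_self _

/-- Complex PSD of the real-to-complex embedding implies real PSD. -/
lemma posSemidef_of_map {ι : Type*} [Fintype ι] {M : Matrix ι ι ℝ}
    (h : (M.map Complex.ofReal).PosSemidef) : M.PosSemidef := by
  refine PosSemidef.of_dotProduct_mulVec_nonneg ?_ ?_
  · ext i j
    have := congrFun (congrFun h.1 i) j
    simp only [conjTranspose_apply, Matrix.map_apply, Complex.star_def,
      Complex.conj_ofReal] at this
    simpa [conjTranspose_apply] using Complex.ofReal_injective this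
  · intro x
    have h2 := h.dotProduct_mulVec_nonneg (fun i => (x i : ℂ))
    have key : star (fun i => (x i : ℂ)) ⬝ᵥ (M.map Complex.ofReal *ᵥ fun i => (x i : ℂ))
        = ((star x ⬝ᵥ M *ᵥ x : ℝ) : ℂ) := by
      simp only [dotProduct, mulVec, Pi.star_apply, Matrix.map_apply, Complex.ofReal_sum,
        Complex.conj_ofReal, Complex.ofReal_mul, Complex.star_def, star_trivial]
    rw [key] at h2
    exact_mod_cast h2

/-- `fromBlocks 0 0 0 M` is PSD when `M` is. -/
lemma posSemidef_fromBlocks00 {a b : ℕ} {M : Matrix (Fin b) (Fin b) ℂ} (hM : M.PosSemidef) :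
    (fromBlocks (0 : Matrix (Fin a) (Fin a) ℂ) 0 0 M).PosSemidef := by
  refine PosSemidef.of_dotProduct_mulVec_nonneg ?_ ?_
  · show (fromBlocks (0 : Matrix (Fin a) (Fin a) ℂ) 0 0 M)ᴴ = _
    rw [fromBlocks_conjTranspose]
    simp [hM.1.eq]
  · intro x
    have hx : x = Sum.elim (x ∘ Sum.inl) (x ∘ Sum.inr) := (Sum.elim_comp_inl_inr x).symm
    rw [hx, fromBlocks_mulVec]
    have hstar : star (Sum.elim (x ∘ Sum.inl) (x ∘ Sum.inr)) =
        Sum.elim (star (x ∘ Sum.inl)) (star (x ∘ Sum.inr)) := by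
      funext i; cases i <;> rfl
    rw [hstar, sumElim_dotProduct_sumElim]
    simpa using hM.dotProduct_mulVec_nonneg (x ∘ Sum.inr)

lemma real_psd {k : ℕ} {R S : Matrix (Fin k) (Fin k) ℝ}
    (h : (R.map Complex.ofReal - Complex.I • S.map Complex.ofReal).PosSemidef) :
    (fromBlocks R (-S) (-S)ᵀ R).PosSemidef := by
  set H : Matrix (Fin k) (Fin k) ℂ := R.map Complex.ofReal - Complex.I • S.map Complex.ofReal
    with hH
  have hsym : ∀ i j, R j i = R i j ∧ S j i = -S i j := by
    intro i j
    have h0 := congrFun (congrFun h.1.eq i) j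
    simp only [hH, conjTranspose_apply, Matrix.sub_apply, Matrix.smul_apply, Matrix.map_apply,
      smul_eq_mul, star_sub, star_mul', Complex.star_def, Complex.conj_ofReal,
      Complex.conj_I] at h0
    rw [Complex.ext_iff] at h0
    simp only [Complex.sub_re, Complex.ofReal_re, Complex.mul_re, Complex.neg_re, Complex.I_re,
      Complex.ofReal_im, Complex.neg_im, Complex.I_im, Complex.sub_im, Complex.mul_im] at h0
    constructor
    · linarith [h0.1]
    · linarith [h0.2]
  have hR : ∀ i j : Fin k, ((R j i : ℝ) : ℂ) = ((R i j : ℝ) : ℂ) := by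
    intro i j; exact_mod_cast congrArg Complex.ofReal (hsym i j).1
  have hS : ∀ i j : Fin k, ((S j i : ℝ) : ℂ) = -((S i j : ℝ) : ℂ) := by
    intro i j
    have := congrArg Complex.ofReal (hsym i j).2
    push_cast at this
    exact this
  set K : Matrix (Fin k ⊕ Fin k) (Fin k ⊕ Fin k) ℝ := fromBlocks R (-S) (-S)ᵀ R with hK
  set L₁ : Matrix (Fin k ⊕ Fin k) (Fin k) ℂ := fromRows 1 (Complex.I • 1) with hL₁
  set L₂ : Matrix (Fin k ⊕ Fin k) (Fin k) ℂ := fromRows 1 ((-Complex.I) • 1) with hL₂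
  have sum_eq : L₁ * H * L₁ᴴ + L₂ * Hᵀ * L₂ᴴ = ((2:ℝ) • K).map Complex.ofReal := by
    have e₁ : L₁ * H * L₁ᴴ = fromBlocks (1 * H * 1ᴴ) (1 * H * (Complex.I • 1)ᴴ)
        (Complex.I • 1 * H * 1ᴴ) (Complex.I • 1 * H * (Complex.I • 1)ᴴ) := by
      rw [hL₁, conjTranspose_fromRows_eq_fromCols_conjTranspose, fromRows_mul,
        fromRows_mul_fromCols]
    have e₂ : L₂ * Hᵀ * L₂ᴴ = fromBlocks (1 * Hᵀ * 1ᴴ) (1 * Hᵀ * ((-Complex.I) • 1)ᴴ)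
        ((-Complex.I) • 1 * Hᵀ * 1ᴴ) ((-Complex.I) • 1 * Hᵀ * ((-Complex.I) • 1)ᴴ) := by
      rw [hL₂, conjTranspose_fromRows_eq_fromCols_conjTranspose, fromRows_mul,
        fromRows_mul_fromCols]
    rw [e₁, e₂]
    ext (i | i) (j | j) <;>
      simp only [hK, hH, fromBlocks_add, Matrix.add_apply, fromBlocks_apply₁₁,
        fromBlocks_apply₁₂, fromBlocks_apply₂₁, fromBlocks_apply₂₂, Matrix.smul_mul,
        Matrix.mul_smul, conjTranspose_smul, conjTranspose_one, Matrix.one_mul, Matrix.mul_one,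
        Matrix.smul_apply, Matrix.sub_apply, Matrix.map_apply, Matrix.transpose_apply,
        Matrix.neg_apply, smul_eq_mul, Complex.star_def, Complex.conj_I, Complex.ofReal_mul,
        Complex.ofReal_neg, Complex.conj_neg_I, smul_smul] <;>
      rw [hR i j, hS i j] <;>
      push_cast <;>
      ring_nf <;>
      simp only [Complex.I_sq, show Complex.I ^ 3 = -Complex.I by
        rw [pow_succ, Complex.I_sq]; ring] <;>
      ring_nf
  have hps : (((2:ℝ) • K).map Complex.ofReal).PosSemidef := by
    rw [← sum_eq]
    exact (h.mul_mul_conjTranspose_same L₁).add ((h.transpose).mul_mul_conjTranspose_same L₂)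
  have h2K : ((2:ℝ) • K).PosSemidef := posSemidef_of_map hps
  refine PosSemidef.of_dotProduct_mulVec_nonneg ?_ ?_
  · have h1 := h2K.1.eq
    rw [conjTranspose_smul, star_trivial] at h1
    exact smul_right_injective _ (two_ne_zero) h1
  · intro x
    have h2 := h2K.dotProduct_mulVec_nonneg x
    rw [smul_mulVec, dotProduct_smul, smul_eq_mul] at h2
    linarith

/-- Prop. 2: if the CM `γ_N = [[A_N,C_N],[C_Nᵀ,B_N]]` satisfies
`γ_N ≥ γ_A ⊕ γ_B` for CMs `γ_A, γ_B`, then `γ_{N+1} ≥ γ_A ⊕ γ_A`. -/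

theorem prop2 {n m : ℕ} (AN : Matrix (Fin (2*n)) (Fin (2*n)) ℝ)
    (BN : Matrix (Fin (2*m)) (Fin (2*m)) ℝ) (CN : Matrix (Fin (2*n)) (Fin (2*m)) ℝ)
    (hCM : IsCM2 (Matrix.fromBlocks AN CN CNᵀ BN))
    (γA : Matrix (Fin (2*n)) (Fin (2*n)) ℝ) (γB : Matrix (Fin (2*m)) (Fin (2*m)) ℝ)
    (hγA : IsCM γA) (hγB : IsCM γB)
    (hsep : (Matrix.fromBlocks AN CN CNᵀ BN - Matrix.fromBlocks γA 0 0 γB).PosSemidef) :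
    (Matrix.fromBlocks (nextA AN BN CN) (nextC BN CN) (nextC BN CN)ᵀ (nextA AN BN CN)
      - Matrix.fromBlocks γA 0 0 γA).PosSemidef := by
  classical
  set T : Matrix (Fin (2*m)) (Fin (2*m)) ℂ := toC BN - Complex.I • toC (J m) with hTdef
  set Q : Matrix (Fin (2*n)) (Fin (2*m)) ℂ := toC CN with hQdef
  set P : Matrix (Fin (2*n)) (Fin (2*n)) ℂ := toC AN - toC γA with hPdef
  have hQH : Qᴴ = toC CNᵀ := by
    ext i j
    simp [hQdef, toC, conjTranspose_apply, Complex.star_def, Complex.conj_ofReal]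
  have hΓ : (fromBlocks P Q Qᴴ T).PosSemidef := by
    have hmap := map_posSemidef hsep
    have hblk := posSemidef_fromBlocks00 (a := 2*n) hγB.2
    have heq : fromBlocks P Q Qᴴ T
        = (fromBlocks AN CN CNᵀ BN - fromBlocks γA 0 0 γB).map Complex.ofReal
          + fromBlocks 0 0 0 (toC γB - Complex.I • toC (J m)) := by
      rw [hQH]
      ext (i | i) (j | j) <;>
        simp [hPdef, hQdef, hTdef, toC, fromBlocks_apply₁₁, fromBlocks_apply₁₂, fromBlocks_apply₂₁,
          fromBlocks_apply₂₂, Matrix.sub_apply, Matrix.add_apply, Matrix.smul_apply,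
          Matrix.map_apply, smul_eq_mul] <;>
        push_cast <;>
        ring
    rw [heq]
    exact hmap.add hblk
  have hT : T.PosSemidef := by
    have h' := hΓ.submatrix Sum.inr
    have he : (fromBlocks P Q Qᴴ T).submatrix Sum.inr Sum.inr = T := rfl
    rwa [he] at h'
  have hSchur := schur_psd hT.1 hΓ
  have hX : Xmap BN CN = Q * pinvC T * Qᴴ := by
    rw [Xmap, hQH]
  have hHps : ((nextA AN BN CN - γA).map Complex.ofReal
      - Complex.I • (imM (Xmap BN CN)).map Complex.ofReal).PosSemidef := by
    have heq : (nextA AN BN CN - γA).map Complex.ofReal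
        - Complex.I • (imM (Xmap BN CN)).map Complex.ofReal = P - Q * pinvC T * Qᴴ := by
      rw [← hX]
      ext i j
      simp only [nextA, reM, imM, hPdef, toC, Matrix.sub_apply, Matrix.smul_apply,
        Matrix.map_apply, Matrix.of_apply, smul_eq_mul]
      push_cast
      have hri := Complex.re_add_im (Xmap BN CN i j)
      linear_combination -hri
    rw [heq]
    exact hSchur
  have hfin := real_psd hHps
  have hfinal : fromBlocks (nextA AN BN CN) (nextC BN CN) (nextC BN CN)ᵀ (nextA AN BN CN)
      - fromBlocks γA 0 0 γA
      = fromBlocks (nextA AN BN CN - γA) (-(imM (Xmap BN CN)))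
          (-(imM (Xmap BN CN)))ᵀ (nextA AN BN CN - γA) := by
    ext (i | i) (j | j) <;>
      simp [nextC, fromBlocks_apply₁₁, fromBlocks_apply₁₂, fromBlocks_apply₂₁,
        fromBlocks_apply₂₂, Matrix.sub_apply]
  rw [hfinal]
  exact hfin
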